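/- Second cohomology of the combinatorial torus: for the 2 × 2 periodic grid, the quotient real vector space H²(T) of the space of all discrete 2-forms by the range of the ℝ-linear map d¹ (on 1-forms) has dimension 1; equivalently, a 2-form ψ lies in range(d¹) if and only if Σ_{(k,s)} ψ(k,s) = 0, and H²(T) is isomorphic to ℝ. -/

import Mathlib

/-- Discrete 0-forms on the periodic grid `ZMod N × ZMod M`. -/
abbrev Form0 (N M : ℕ) := ZMod N × ZMod M → ℝ
/-- Discrete 1-forms on the periodic grid `ZMod N × ZMod M`: pairs of functions. -/
abbrev Form1 (N M : ℕ) := (ZMod N × ZMod M → ℝ) × (ZMod N × ZMod M → ℝ)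
/-- Discrete 2-forms on the periodic grid `ZMod N × ZMod M`. -/
abbrev Form2 (N M : ℕ) := ZMod N × ZMod M → ℝ

/-- Discrete exterior derivative on 0-forms. -/
def d0 (N M : ℕ) : Form0 N M →ₗ[ℝ] Form1 N M where
  toFun φ := (fun p => φ (p.1 + 1, p.2) - φ p, fun p => φ (p.1, p.2 + 1) - φ p)
  map_add' φ ψ := by refine Prod.ext ?_ ?_ <;> funext p <;> simp <;> ring
  map_smul' c φ := by refine Prod.ext ?_ ?_ <;> funext p <;> simp <;> ring

/-- Discrete exterior derivative on 1-forms. -/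
def d1 (N M : ℕ) : Form1 N M →ₗ[ℝ] Form2 N M where
  toFun ω := fun p => (ω.2 (p.1 + 1, p.2) - ω.2 p) - (ω.1 (p.1, p.2 + 1) - ω.1 p)
  map_add' ω η := by funext p; simp; ring
  map_smul' c ω := by funext p; simp; ring

/-- Discrete codifferential on 1-forms. -/
def delta1 (N M : ℕ) : Form1 N M →ₗ[ℝ] Form0 N M where
  toFun ω := fun p => (ω.1 (p.1 - 1, p.2) - ω.1 p) + (ω.2 (p.1, p.2 - 1) - ω.2 p)
  map_add' ω η := by funext p; simp; ring
  map_smul' c ω := by funext p; simp; ring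

/-- Discrete codifferential on 2-forms. -/
def delta2 (N M : ℕ) : Form2 N M →ₗ[ℝ] Form1 N M where
  toFun ψ := (fun p => ψ p - ψ (p.1, p.2 - 1), fun p => ψ (p.1 - 1, p.2) - ψ p)
  map_add' ψ χ := by refine Prod.ext ?_ ?_ <;> funext p <;> simp <;> ring
  map_smul' c ψ := by refine Prod.ext ?_ ?_ <;> funext p <;> simp <;> ring

/-- Discrete Laplacian on 0-forms: `Δ⁰ = δ¹ ∘ d⁰`. -/
def lap0 (N M : ℕ) : Form0 N M →ₗ[ℝ] Form0 N M := delta1 N M ∘ₗ d0 N M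
/-- Discrete Laplacian on 1-forms: `Δ¹ = d⁰ ∘ δ¹ + δ² ∘ d¹`. -/
def lap1 (N M : ℕ) : Form1 N M →ₗ[ℝ] Form1 N M :=
  d0 N M ∘ₗ delta1 N M + delta2 N M ∘ₗ d1 N M
/-- Discrete Laplacian on 2-forms: `Δ² = d¹ ∘ δ²`. -/
def lap2 (N M : ℕ) : Form2 N M →ₗ[ℝ] Form2 N M := d1 N M ∘ₗ delta2 N M

/-- Inner product of two 0-forms (or two 2-forms). -/
def inner0 (N M : ℕ) [NeZero N] [NeZero M] (φ ψ : Form0 N M) : ℝ := ∑ p, φ p * ψ p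
/-- Inner product of two 1-forms. -/
def inner1 (N M : ℕ) [NeZero N] [NeZero M] (ω η : Form1 N M) : ℝ :=
  ∑ p, (ω.1 p * η.1 p + ω.2 p * η.2 p)

lemma sum_zmod2 (f : ZMod 2 → ℝ) : ∑ x, f x = f 0 + f 1 := by
  have : (Finset.univ : Finset (ZMod 2)) = {0, 1} := by decide
  rw [this]; simp

/-- Sum functional on 2-forms. -/
def sumMap : Form2 2 2 →ₗ[ℝ] ℝ where
  toFun ψ := ∑ p, ψ p
  map_add' ψ χ := by simp [Finset.sum_add_distrib]
  map_smul' c ψ := by simp [Finset.mul_sum]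

lemma sum22 (ψ : Form2 2 2) :
    ∑ p, ψ p = ψ (0,0) + ψ (0,1) + (ψ (1,0) + ψ (1,1)) := by
  rw [Fintype.sum_prod_type, sum_zmod2 (fun x => ∑ y, ψ (x, y)),
    sum_zmod2 (fun y => ψ (0, y)), sum_zmod2 (fun y => ψ (1, y))]

lemma mem_range_iff (ψ : Form2 2 2) :
    ψ ∈ LinearMap.range (d1 2 2) ↔ ∑ p, ψ p = 0 := by
  have h2 : ((1:ZMod 2)+1) = 0 := rfl
  constructor
  · rintro ⟨ω, rfl⟩
    rw [sum22]
    simp only [d1, LinearMap.coe_mk, AddHom.coe_mk, h2, show ((0:ZMod 2)+1) = 1 from rfl]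
    ring
  · intro h
    rw [sum22] at h
    refine ⟨(fun p => if p = (1, 1) then -ψ (0, 0) - ψ (1, 0) else 0,
            fun p => if p.1 = 1 then ψ (0, p.2) else 0), ?_⟩
    funext p
    obtain ⟨k, s⟩ := p
    have hk : ∀ k : ZMod 2, k = 0 ∨ k = 1 := by decide
    rcases hk k with rfl | rfl <;> rcases hk s with rfl | rfl <;>
      simp only [show (((0:ZMod 2),(0:ZMod 2)) : ZMod 2 × ZMod 2) = 0 from rfl,
        show (((1:ZMod 2),(1:ZMod 2)) : ZMod 2 × ZMod 2) = 1 from rfl] at h <;>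
      norm_num [d1, show ((1:ZMod 2)+1) = 0 from rfl, show ((0:ZMod 2)+1) = 1 from rfl,
        show ((2:ZMod 2) = 1) ↔ False from by decide, Prod.mk.injEq] <;>
      linarith [show ψ 0 = ψ (0, 0) from rfl, show ψ 1 = ψ (1, 1) from rfl]

lemma range_eq_ker : LinearMap.range (d1 2 2) = LinearMap.ker sumMap := by
  ext ψ
  rw [mem_range_iff, LinearMap.mem_ker]
  rfl

lemma sum_surj : Function.Surjective sumMap := by
  intro c
  refine ⟨fun p => if p = (0,0) then c else 0, ?_⟩
  have : sumMap (fun p => if p = (0,0) then c else 0) =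
      ∑ p : ZMod 2 × ZMod 2, (if p = (0,0) then c else 0) := rfl
  rw [this, sum22]
  norm_num


/-- **Second cohomology of the combinatorial torus**: on the `2 × 2` periodic grid a 2-form
`ψ` is exact, i.e. `ψ ∈ range(d¹)`, iff `Σ_{(k,s)} ψ(k,s) = 0`, and the quotient space
`H²(T)` of all 2-forms modulo `range(d¹)` is one-dimensional, hence isomorphic to `ℝ`. -/
theorem cohomology_two_torus :
    (∀ ψ : Form2 2 2, ψ ∈ LinearMap.range (d1 2 2) ↔ ∑ p, ψ p = 0) ∧
    Module.finrank ℝ (Form2 2 2 ⧸ LinearMap.range (d1 2 2)) = 1 ∧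
    Nonempty ((Form2 2 2 ⧸ LinearMap.range (d1 2 2)) ≃ₗ[ℝ] ℝ) := by
  have e : (Form2 2 2 ⧸ LinearMap.range (d1 2 2)) ≃ₗ[ℝ] ℝ := by
    rw [range_eq_ker]
    exact sumMap.quotKerEquivOfSurjective sum_surj
  exact ⟨mem_range_iff, by rw [e.finrank_eq, Module.finrank_self], ⟨e⟩⟩
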